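/- Let G be a finitely generated group, K a field, A a finite-dimensional K-vector space, Σ ⊆ A^G a linear subshift, and τ : Σ → Σ a linear cellular automaton. Then the limit set Ω(τ) = ⋂_{n≥1} τⁿ(Σ) satisfies τ(Ω(τ)) = Ω(τ). -/

import Mathlib

set_option linter.unusedSectionVars false


def shiftSigma (G : Type*) [Group G] {A : Type*} (D : Set G) (P : Set (D → A)) :
    Set (G → A) :=
  {x | ∀ g : G, (fun d : D => x (g * (d : G))) ∈ P}

def prodiscreteTop (G A : Type*) : TopologicalSpace (G → A) :=
  @Pi.topologicalSpace G (fun _ => A) (fun _ => ⊥)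

def IsLinearSubshift (K : Type*) {G A : Type*} [Field K] [Group G] [AddCommGroup A]
    [Module K A] (S : Set (G → A)) : Prop :=
  (∃ M : Submodule K (G → A), (M : Set (G → A)) = S) ∧
    (∀ g : G, ∀ x ∈ S, (fun h => x (g⁻¹ * h)) ∈ S) ∧
    @IsClosed _ (prodiscreteTop G A) S

def IsSFT {G A : Type*} [Group G] (S : Set (G → A)) : Prop :=
  ∃ (D : Finset G) (P : Set (↥(D : Set G) → A)), S = shiftSigma G (D : Set G) P

def IsLCA (K : Type*) {G A : Type*} [Field K] [Group G] [AddCommGroup A] [Module K A]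
    (τ : (G → A) → (G → A)) : Prop :=
  IsLinearMap K τ ∧ ∃ (M : Finset G) (μ : (↥(M : Set G) → A) → A), IsLinearMap K μ ∧
    ∀ (x : G → A) (g : G), τ x g = μ (fun m : (M : Set G) => x (g * (m : G)))


section Aff

variable (K : Type*) {V W : Type*} [Field K] [AddCommGroup V] [Module K V]
  [AddCommGroup W] [Module K W]

/-- A nonempty affine subspace (coset of a submodule). -/
def AffLike (C : Set V) : Prop :=
  ∃ (p : V) (M : Submodule K V), C = {x | x - p ∈ M}

variable {K}

lemma AffLike.nonempty {C : Set V} (h : AffLike K C) : C.Nonempty := by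
  obtain ⟨p, M, rfl⟩ := h
  exact ⟨p, by simp⟩

lemma AffLike.rebase {C : Set V} (h : AffLike K C) {r : V} (hr : r ∈ C) :
    ∃ M : Submodule K V, C = {x | x - r ∈ M} := by
  obtain ⟨p, M, rfl⟩ := h
  have hrp : r - p ∈ M := hr
  refine ⟨M, Set.ext fun x => ?_⟩
  simp only [Set.mem_setOf_eq]
  constructor
  · intro hx
    have : x - r = (x - p) - (r - p) := by abel
    rw [this]; exact M.sub_mem hx hrp
  · intro hx
    have : x - p = (x - r) + (r - p) := by abel
    rw [this]; exact M.add_mem hx hrp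

lemma AffLike.inter {C D : Set V} (hC : AffLike K C) (hD : AffLike K D)
    (hne : (C ∩ D).Nonempty) : AffLike K (C ∩ D) := by
  obtain ⟨r, hrC, hrD⟩ := hne
  obtain ⟨M, hM⟩ := hC.rebase hrC
  obtain ⟨N, hN⟩ := hD.rebase hrD
  refine ⟨r, M ⊓ N, ?_⟩
  rw [hM, hN]
  ext x
  simp [Set.mem_inter_iff]

lemma AffLike.image (f : V →ₗ[K] W) {C : Set V} (h : AffLike K C) :
    AffLike K (f '' C) := by
  obtain ⟨p, M, rfl⟩ := h
  refine ⟨f p, M.map f, Set.ext fun y => ?_⟩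
  simp only [Set.mem_image, Set.mem_setOf_eq, Submodule.mem_map]
  constructor
  · rintro ⟨x, hx, rfl⟩
    exact ⟨x - p, hx, by rw [map_sub]⟩
  · rintro ⟨m, hm, hme⟩
    refine ⟨p + m, by simpa using hm, ?_⟩
    rw [map_add, hme]; abel

lemma AffLike.preimage (f : V →ₗ[K] W) {D : Set W} (h : AffLike K D)
    (hne : (f ⁻¹' D).Nonempty) : AffLike K (f ⁻¹' D) := by
  obtain ⟨r, hr⟩ := hne
  obtain ⟨M, hM⟩ := h.rebase (hr : f r ∈ D)
  refine ⟨r, M.comap f, Set.ext fun z => ?_⟩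
  simp only [Set.mem_preimage, hM, Set.mem_setOf_eq, Submodule.mem_comap, map_sub]

lemma AffLike.submodule (M : Submodule K V) : AffLike K (M : Set V) :=
  ⟨0, M, by ext x; simp⟩

lemma nat_antitone_stab (f : ℕ → ℕ) (hf : Antitone f) :
    ∃ N, ∀ m, N ≤ m → f m = f N := by
  obtain ⟨N, hN⟩ := Nat.sInf_mem (Set.range_nonempty f)
  refine ⟨N, fun m hm => le_antisymm (hf hm) ?_⟩
  rw [hN]
  exact Nat.sInf_le ⟨m, rfl⟩

lemma affChain_stab [FiniteDimensional K V] (D : ℕ → Set V)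
    (hA : ∀ n, AffLike K (D n)) (hm : Antitone D) :
    ∃ N, ∀ m, N ≤ m → D m = D N := by
  choose p M hD using hA
  have hdir : ∀ {n m : ℕ}, n ≤ m → M m ≤ M n := by
    intro n m h v hv
    have h1 : p m + v ∈ D m := by rw [hD m]; simpa using hv
    have h2 : p m ∈ D m := by rw [hD m]; simp
    have h1' : p m + v - p n ∈ M n := by have := hm h h1; rwa [hD n] at this
    have h2' : p m - p n ∈ M n := by have := hm h h2; rwa [hD n] at this
    have hveq : v = (p m + v - p n) - (p m - p n) := by abel
    rw [hveq]; exact (M n).sub_mem h1' h2'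
  have hrk : Antitone fun n => Module.finrank K (M n) :=
    fun n m h => Submodule.finrank_mono (hdir h)
  obtain ⟨N, hN⟩ := nat_antitone_stab _ hrk
  refine ⟨N, fun m hm' => ?_⟩
  have hMeq : M m = M N :=
    Submodule.eq_of_le_of_finrank_le (hdir hm') (le_of_eq (hN m hm').symm)
  have hpm : p m ∈ D N := hm hm' (by rw [hD m]; simp)
  rw [hD N] at hpm
  rw [hD m, hD N]
  ext x
  simp only [Set.mem_setOf_eq, hMeq]
  constructor
  · intro hx
    have : x - p N = (x - p m) + (p m - p N) := by abel
    rw [this]; exact (M N).add_mem hx hpm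
  · intro hx
    have : x - p m = (x - p N) - (p m - p N) := by abel
    rw [this]; exact (M N).sub_mem hx hpm

end Aff

section Shift

variable {G A : Type*} [Group G] {K : Type*} [Field K] [AddCommGroup A] [Module K A]

/-- Closed in the prodiscrete topology, phrased combinatorially. -/
def PClosed (C : Set (G → A)) : Prop :=
  ∀ y : G → A, (∀ F : Finset G, ∃ c ∈ C, ∀ g ∈ F, c g = y g) → y ∈ C

lemma PClosed.inter {C D : Set (G → A)} (hC : PClosed C) (hD : PClosed D) :
    PClosed (C ∩ D) := by
  intro y hy
  constructor
  · exact hC y fun F => (hy F).imp fun c hc => ⟨hc.1.1, hc.2⟩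
  · exact hD y fun F => (hy F).imp fun c hc => ⟨hc.1.2, hc.2⟩

lemma pClosed_of_isClosed {S : Set (G → A)}
    (h : @IsClosed _ (prodiscreteTop G A) S) : PClosed S := by
  intro y hy
  letI : TopologicalSpace A := ⊥
  letI : TopologicalSpace (G → A) := prodiscreteTop G A
  have hsub : closure S ⊆ S := h.closure_subset
  apply hsub
  rw [mem_closure_iff]
  intro o ho hyo
  obtain ⟨I, u, hI, hsub'⟩ := isOpen_pi_iff.mp ho y hyo
  obtain ⟨c, hcS, hc⟩ := hy I
  refine ⟨c, hsub' ?_, hcS⟩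
  intro i hi
  rw [hc i hi]
  exact (hI i hi).2

variable (K) in
lemma chain_nonempty [FiniteDimensional K A]
    (F : ℕ → Finset G) (hFm : Monotone F) (hFe : ∀ g : G, ∃ k, g ∈ F k)
    (C : ℕ → Set (G → A)) (hA : ∀ n, AffLike K (C n)) (hP : ∀ n, PClosed (C n))
    (hanti : Antitone C) : (⋂ n, C n).Nonempty := by
  classical
  let π : ∀ k, (G → A) →ₗ[K] (↥(F k) → A) :=
    fun k => LinearMap.funLeft K A (fun i : ↥(F k) => (i : G))
  have hDk : ∀ k, ∃ N, ∀ m, N ≤ m → π k '' C m = π k '' C N := by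
    intro k
    exact affChain_stab (fun n => π k '' C n) (fun n => (hA n).image (π k))
      (fun n m h => Set.image_mono (hanti h))
  choose N hN using hDk
  let E : ∀ k, Set (↥(F k) → A) := fun k => π k '' C (N k)
  have hEsub : ∀ k n, E k ⊆ π k '' C n := by
    intro k n
    rcases le_total n (N k) with h | h
    · exact Set.image_mono (hanti h)
    · exact (hN k n h).symm.subset
  have hEne : ∀ k, (E k).Nonempty := fun k => ((hA (N k)).nonempty).image _
  have hsurj : ∀ k, ∀ u, u ∈ E k →
      ∃ v, v ∈ E (k + 1) ∧ (fun i : ↥(F k) => v ⟨i.1, hFm k.le_succ i.2⟩) = u := by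
    intro k u hu
    have h1 : E k = π k '' C (max (N k) (N (k + 1))) :=
      (hN k _ (le_max_left _ _)).symm
    rw [h1] at hu
    obtain ⟨c, hc, rfl⟩ := hu
    refine ⟨π (k + 1) c, ?_, rfl⟩
    have h2 : E (k + 1) = π (k + 1) '' C (max (N k) (N (k + 1))) :=
      (hN (k + 1) _ (le_max_right _ _)).symm
    rw [h2]
    exact ⟨c, hc, rfl⟩
  let a : ∀ k, {u : ↥(F k) → A // u ∈ E k} := fun k =>
    Nat.rec ⟨(hEne 0).choose, (hEne 0).choose_spec⟩
      (fun k p => ⟨(hsurj k p.1 p.2).choose, (hsurj k p.1 p.2).choose_spec.1⟩) k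
  have hstep : ∀ k (i : ↥(F k)), (a (k + 1)).1 ⟨i.1, hFm k.le_succ i.2⟩ = (a k).1 i := by
    intro k i
    exact congrFun (hsurj k (a k).1 (a k).2).choose_spec.2 i
  have hcomp : ∀ k m (h : k ≤ m) (i : ↥(F k)), (a m).1 ⟨i.1, hFm h i.2⟩ = (a k).1 i := by
    intro k m h
    induction m, h using Nat.le_induction with
    | base => intro i; exact congrArg _ (Subtype.ext rfl)
    | succ m hm ih =>
        intro i
        have e1 := hstep m ⟨i.1, hFm hm i.2⟩
        exact e1.trans (ih i)
  choose idx hidx using hFe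
  let y : G → A := fun g => (a (idx g)).1 ⟨g, hidx g⟩
  have hay : ∀ k (i : ↥(F k)), (a k).1 i = y i.1 := by
    intro k i
    have h1 := hcomp k (max k (idx i.1)) (le_max_left _ _) i
    have h2 := hcomp (idx i.1) (max k (idx i.1)) (le_max_right _ _) ⟨i.1, hidx i.1⟩
    exact h1.symm.trans h2
  refine ⟨y, Set.mem_iInter.mpr fun n => ?_⟩
  apply hP n
  intro Fs
  let k := Fs.sup idx
  obtain ⟨c, hcC, hcπ⟩ := hEsub k n (a k).2
  refine ⟨c, hcC, fun g hg => ?_⟩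
  have hgk : g ∈ F k := Finset.mem_of_subset (hFm (Finset.le_sup hg)) (hidx g)
  calc c g = π k c ⟨g, hgk⟩ := rfl
    _ = (a k).1 ⟨g, hgk⟩ := congrFun hcπ ⟨g, hgk⟩
    _ = y g := hay k ⟨g, hgk⟩

lemma pClosed_eqOn {τ : (G → A) → (G → A)} (M₀ : Finset G)
    (μ : (↥(M₀ : Set G) → A) → A)
    (hloc : ∀ (x : G → A) (g : G), τ x g = μ fun m : ↥(M₀ : Set G) => x (g * (m : G)))
    (E : Set G) (t : G → A) : PClosed {z : G → A | ∀ g ∈ E, τ z g = t g} := by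
  classical
  intro y hy g hg
  obtain ⟨c, hc, hcy⟩ := hy (M₀.image fun m => g * m)
  have heq : τ y g = τ c g := by
    rw [hloc, hloc]
    congr 1
    funext m
    exact (hcy (g * (m : G)) (Finset.mem_image_of_mem _ m.2)).symm
  rw [heq]
  exact hc g hg

variable (K) in
lemma pClosed_image [FiniteDimensional K A]
    (F : ℕ → Finset G) (hFm : Monotone F) (hFe : ∀ g : G, ∃ k, g ∈ F k)
    {τ : (G → A) → (G → A)} (hτ : IsLinearMap K τ) (M₀ : Finset G)
    (μ : (↥(M₀ : Set G) → A) → A)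
    (hloc : ∀ (x : G → A) (g : G), τ x g = μ fun m : ↥(M₀ : Set G) => x (g * (m : G)))
    {S : Set (G → A)} (SM : Submodule K (G → A)) (hSM : (SM : Set (G → A)) = S)
    (hPS : PClosed S) : PClosed (τ '' S) := by
  intro y hy
  let L : (G → A) →ₗ[K] (G → A) := IsLinearMap.mk' τ hτ
  let C : ℕ → Set (G → A) := fun k => S ∩ {z | ∀ g ∈ (F k : Set G), τ z g = y g}
  have hCne : ∀ k, (C k).Nonempty := by
    intro k
    obtain ⟨c, hcim, hc⟩ := hy (F k)
    obtain ⟨s, hs, rfl⟩ := hcim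
    exact ⟨s, hs, fun g hg => hc g hg⟩
  have hCA : ∀ k, AffLike K (C k) := by
    intro k
    refine AffLike.inter ?_ ?_ (hCne k)
    · rw [← hSM]; exact AffLike.submodule SM
    · have hEq : {z : G → A | ∀ g ∈ (F k : Set G), τ z g = y g} =
          (LinearMap.funLeft K A (fun i : ↥(F k) => (i : G)) ∘ₗ L) ⁻¹'
            {w | w - (fun i : ↥(F k) => y i) ∈ (⊥ : Submodule K (↥(F k) → A))} := by
        ext z
        simp only [Set.mem_setOf_eq, Set.mem_preimage, Submodule.mem_bot, sub_eq_zero,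
          funext_iff, LinearMap.coe_comp, Function.comp_apply, LinearMap.funLeft_apply]
        constructor
        · intro h i
          exact h i.1 i.2
        · intro h g hg
          exact h ⟨g, hg⟩
      rw [hEq]
      apply AffLike.preimage _ ⟨_, ⊥, rfl⟩
      obtain ⟨z, hz⟩ := hCne k
      exact ⟨z, hEq ▸ hz.2⟩
  have hCP : ∀ k, PClosed (C k) :=
    fun k => hPS.inter (pClosed_eqOn M₀ μ hloc _ y)
  have hCanti : Antitone C := by
    intro n m h z hz
    exact ⟨hz.1, fun g hg => hz.2 g (hFm h hg)⟩
  obtain ⟨z, hz⟩ := chain_nonempty K F hFm hFe C hCA hCP hCanti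
  rw [Set.mem_iInter] at hz
  refine ⟨z, (hz 0).1, ?_⟩
  funext g
  obtain ⟨k, hk⟩ := hFe g
  exact (hz k).2 g hk

end Shift

lemma countable_of_group_fg {G : Type*} [Group G] (hfg : Group.FG G) : Countable G := by
  classical
  have hmfg : Monoid.FG G := Group.fg_iff_monoid_fg.mp hfg
  obtain ⟨S, hS⟩ := hmfg.fg_top
  have key : ∀ g : G, ∃ l : List G, (∀ x ∈ l, x ∈ (S : Set G)) ∧ l.prod = g := by
    intro g
    have hg : g ∈ Submonoid.closure (S : Set G) := by rw [hS]; trivial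
    exact Submonoid.exists_list_of_mem_closure hg
  have hlist : ∀ l : List G, (∀ x ∈ l, x ∈ (S : Set G)) →
      ∃ l' : List {x // x ∈ (S : Set G)}, l'.map Subtype.val = l := by
    intro l
    induction l with
    | nil => exact fun _ => ⟨[], rfl⟩
    | cons a l ih =>
        intro h
        obtain ⟨l', hl'⟩ := ih fun x hx => h x (List.mem_cons_of_mem a hx)
        exact ⟨⟨a, h a (List.mem_cons_self)⟩ :: l', by simp [hl']⟩
  have hsurj : Function.Surjective
      (fun l : List {x // x ∈ (S : Set G)} => (l.map Subtype.val).prod) := by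
    intro g
    obtain ⟨l, hl, hp⟩ := key g
    obtain ⟨l', rfl⟩ := hlist l hl
    exact ⟨l', hp⟩
  exact hsurj.countable
theorem stmt15 {G K A : Type*} [Group G] [Field K] [AddCommGroup A] [Module K A]
    [FiniteDimensional K A] (hfg : Group.FG G)
    (S : Set (G → A)) (hlin : IsLinearSubshift K S)
    (τ : (G → A) → (G → A)) (hτ : IsLCA K τ) (hmap : Set.MapsTo τ S S) :
    τ '' (⋂ (n : ℕ) (_ : 1 ≤ n), τ^[n] '' S) =
      ⋂ (n : ℕ) (_ : 1 ≤ n), τ^[n] '' S := by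
  classical
  obtain ⟨⟨SM, hSM⟩, _, hcl⟩ := hlin
  have hSP : PClosed S := pClosed_of_isClosed hcl
  obtain ⟨hτlin, M₀, μ, hμlin, hloc⟩ := hτ
  have hcnt : Countable G := countable_of_group_fg hfg
  have hne : Nonempty G := ⟨1⟩
  obtain ⟨e, he⟩ := exists_surjective_nat G
  let F : ℕ → Finset G := fun k => (Finset.range (k + 1)).image e
  have hFm : Monotone F := fun n m h =>
    Finset.image_subset_image (Finset.range_subset_range.mpr (by omega))
  have hFe : ∀ g : G, ∃ k, g ∈ F k := by
    intro g
    obtain ⟨k, rfl⟩ := he g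
    exact ⟨k, Finset.mem_image_of_mem _ (Finset.mem_range.mpr (by omega))⟩
  let L : (G → A) →ₗ[K] (G → A) := IsLinearMap.mk' τ hτlin
  have hLτ : ∀ z, L z = τ z := fun z => rfl
  -- iterated images are submodules and PClosed
  have hiter : ∀ n : ℕ, ∃ Mn : Submodule K (G → A),
      (Mn : Set (G → A)) = τ^[n] '' S ∧ PClosed (τ^[n] '' S) := by
    intro n
    induction n with
    | zero => exact ⟨SM, by simpa using hSM, by simpa using hSP⟩
    | succ n ih =>
        obtain ⟨Mn, hMn, hPn⟩ := ih
        have himg : τ '' (τ^[n] '' S) = τ^[n + 1] '' S := by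
          rw [Function.iterate_succ', Set.image_comp]
        refine ⟨Mn.map L, ?_, ?_⟩
        · rw [Submodule.map_coe, hMn, ← himg]
          rfl
        · rw [← himg]
          exact pClosed_image K F hFm hFe hτlin M₀ μ hloc Mn hMn hPn
  choose Msub hMsub hPiter using hiter
  have hdec : ∀ n : ℕ, τ^[n + 1] '' S ⊆ τ^[n] '' S := by
    intro n
    rw [Function.iterate_succ, Set.image_comp]
    exact Set.image_mono hmap.image_subset
  apply Set.Subset.antisymm
  · rintro _ ⟨w, hw, rfl⟩
    simp only [Set.mem_iInter] at hw ⊢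
    intro n hn
    obtain ⟨s, hs, rfl⟩ := hw n hn
    exact hdec n ⟨s, hs, (Function.iterate_succ_apply' τ n s)⟩
  · intro x hx
    simp only [Set.mem_iInter] at hx
    have hx' : ∀ n : ℕ, x ∈ τ^[n + 1] '' S := fun n => hx (n + 1) (by omega)
    let C : ℕ → Set (G → A) := fun n => {z | τ z = x} ∩ τ^[n] '' S
    have hCne : ∀ n, (C n).Nonempty := by
      intro n
      obtain ⟨s, hs, hsx⟩ := hx' n
      refine ⟨τ^[n] s, ?_, ⟨s, hs, rfl⟩⟩
      show τ (τ^[n] s) = x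
      rw [← Function.iterate_succ_apply' τ n s]
      exact hsx
    have hCP : ∀ n, PClosed (C n) := by
      intro n
      have hfib : {z : G → A | τ z = x} =
          {z : G → A | ∀ g ∈ (Set.univ : Set G), τ z g = x g} := by
        ext z
        simp [funext_iff]
      refine PClosed.inter ?_ (hPiter n)
      rw [hfib]
      exact pClosed_eqOn M₀ μ hloc _ x
    have hCA : ∀ n, AffLike K (C n) := by
      intro n
      refine AffLike.inter ?_ ?_ (hCne n)
      · have e1 : {z : G → A | τ z = x} =
            L ⁻¹' {w | w - x ∈ (⊥ : Submodule K (G → A))} := by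
          ext z
          simp [hLτ, sub_eq_zero]
        rw [e1]
        refine AffLike.preimage L ⟨x, ⊥, rfl⟩ ?_
        obtain ⟨z, hz1, _⟩ := hCne n
        exact ⟨z, by simpa [hLτ, sub_eq_zero] using hz1⟩
      · rw [← hMsub n]
        exact AffLike.submodule (Msub n)
    have hCanti : Antitone C :=
      antitone_nat_of_succ_le fun n => Set.inter_subset_inter_right _ (hdec n)
    obtain ⟨z, hz⟩ := chain_nonempty K F hFm hFe C hCA hCP hCanti
    rw [Set.mem_iInter] at hz
    refine ⟨z, ?_, (hz 0).1⟩
    simp only [Set.mem_iInter]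
    intro n hn
    exact (hz n).2
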